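/- For integers s ≥ 2, c ≥ 1, and 1 ≤ j ≤ c, the identity Σ_{i=j-1}^{c-1} binom(i, j-1) * binom(s+i-1, i) = binom(s+j-2, j-1) * Σ_{i=j-1}^{c-1} binom(s+i-1, s+j-2) holds. -/

import Mathlib

/-- For integers `s ≥ 2`, `c ≥ 1` and `1 ≤ j ≤ c`,
`Σ_{i=j-1}^{c-1} C(i, j-1) · C(s+i-1, i) = C(s+j-2, j-1) · Σ_{i=j-1}^{c-1} C(s+i-1, s+j-2)`. -/
theorem betti_binomial_identity (s c j : ℕ) (hs : 2 ≤ s) (hc : 1 ≤ c)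
    (hj : 1 ≤ j) (hjc : j ≤ c) :
    ∑ i ∈ Finset.Icc (j - 1) (c - 1), Nat.choose i (j - 1) * Nat.choose (s + i - 1) i =
      Nat.choose (s + j - 2) (j - 1) *
        ∑ i ∈ Finset.Icc (j - 1) (c - 1), Nat.choose (s + i - 1) (s + j - 2) := by
  rw [Finset.mul_sum]
  refine Finset.sum_congr rfl fun i hi => ?_
  obtain ⟨h1, h2⟩ := Finset.mem_Icc.mp hi
  have key1 := Nat.choose_mul (n := s + i - 1) h1
  have key2 := Nat.choose_mul (n := s + i - 1) (k := s + j - 2)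
    (show j - 1 ≤ s + j - 2 by omega)
  have e1 : s + i - 1 - (j - 1) = s + i - j := by omega
  have e2 : s + j - 2 - (j - 1) = s - 1 := by omega
  have e3 : (s + i - j).choose (i - (j - 1)) = (s + i - j).choose (s - 1) := by
    rw [show s - 1 = (s + i - j) - (i - (j - 1)) by omega]
    exact (Nat.choose_symm (by omega)).symm
  rw [e1] at key1 key2
  rw [e2] at key2
  rw [e3] at key1
  rw [mul_comm (Nat.choose i (j-1)), key1, mul_comm ((s + j - 2).choose (j - 1)), key2]
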